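/- Let A be a real symmetric matrix indexed by (Fin p × Fin q) with nonpositive off-diagonal entries, trace 1, and all row sums equal to zero (i.e., A ∈ S_1^0). Call an off-diagonal entry A_{(i,j),(i',j')} ≠ 0 an entangled edge if i ≠ i' and j ≠ j'. If A has at least one entangled edge and there is a fixed index v = (i₀,j₀) such that every entangled edge of A is incident to v (i.e., whenever A_{(i,j),(i',j')} ≠ 0 with i ≠ i' and j ≠ j', then (i,j) = v or (i',j') = v), then A is not separable in ℂ^p ⊗ ℂ^q. -/

import Mathlib

open Matrix BigOperators Kronecker
open scoped ComplexOrder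

noncomputable section

/-- The `(p,q)`-partial transpose of a matrix indexed by `Fin p × Fin q`:
`A^pT_{(i,j),(k,l)} = A_{(i,l),(k,j)}`. -/
def ptrans {p q : ℕ} {α : Type*} (A : Matrix (Fin p × Fin q) (Fin p × Fin q) α) :
    Matrix (Fin p × Fin q) (Fin p × Fin q) α :=
  fun x y => A (x.1, y.2) (y.1, x.2)

/-- A density matrix: Hermitian, positive semidefinite, with trace 1. -/
def IsDensityMatrix {n : Type*} [Fintype n] (ρ : Matrix n n ℂ) : Prop :=
  ρ.IsHermitian ∧ ρ.PosSemidef ∧ ρ.trace = 1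

/-- Separability in ℂ^p ⊗ ℂ^q : a finite convex combination of Kronecker products
of density matrices. -/
def SeparableState {p q : ℕ} (A : Matrix (Fin p × Fin q) (Fin p × Fin q) ℂ) : Prop :=
  ∃ (m : ℕ) (c : Fin m → ℝ) (ρ : Fin m → Matrix (Fin p) (Fin p) ℂ)
    (η : Fin m → Matrix (Fin q) (Fin q) ℂ),
    (∀ i, 0 ≤ c i) ∧ (∑ i, c i) = 1 ∧
    (∀ i, IsDensityMatrix (ρ i)) ∧ (∀ i, IsDensityMatrix (η i)) ∧
    A = ∑ i, (c i : ℂ) • (ρ i ⊗ₖ η i)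

/-- Separability of a real matrix, viewed as a complex matrix. -/
def SeparableStateR {p q : ℕ} (A : Matrix (Fin p × Fin q) (Fin p × Fin q) ℝ) : Prop :=
  SeparableState (A.map (fun x => (x : ℂ)))

/-- A square real matrix is line sum symmetric if each row sum equals the
corresponding column sum. -/
def LineSumSymm {q : ℕ} (B : Matrix (Fin q) (Fin q) ℝ) : Prop :=
  ∀ j, (∑ l, B j l) = ∑ l, B l j

/-- A simple circuit matrix: there are distinct indices `i_1, …, i_k` (`k ≥ 1`) with
`C_{i_m i_{m+1}} = 1` (cyclically) and all other entries 0. -/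
def IsSimpleCircuit {q : ℕ} (C : Matrix (Fin q) (Fin q) ℝ) : Prop :=
  ∃ (k : ℕ) (hk : 0 < k) (f : Fin k → Fin q), Function.Injective f ∧
    ∀ a b : Fin q, C a b =
      if ∃ m : Fin k, a = f m ∧ b = f ⟨((m : ℕ) + 1) % k, Nat.mod_lt _ hk⟩ then 1 else 0

/-- The 2q×2q block matrix `[[A11, A12], [A21, A22]]` indexed by `Fin 2 × Fin q`. -/
def twoBlock {q : ℕ} {α : Type*} (A11 A12 A21 A22 : Matrix (Fin q) (Fin q) α) :
    Matrix (Fin 2 × Fin q) (Fin 2 × Fin q) α :=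
  fun a b =>
    if a.1 = 0 then (if b.1 = 0 then A11 a.2 b.2 else A12 a.2 b.2)
    else (if b.1 = 0 then A21 a.2 b.2 else A22 a.2 b.2)

/-- The q×q block `A^{i,k}` of a matrix indexed by `Fin p × Fin q`. -/
def blockOf {p q : ℕ} (A : Matrix (Fin p × Fin q) (Fin p × Fin q) ℝ) (i k : Fin p) :
    Matrix (Fin q) (Fin q) ℝ :=
  fun j l => A (i, j) (k, l)

/-- Kronecker product of PSD complex matrices is PSD. -/
lemma kron_psd {n m : Type*} [Fintype n] [Fintype m] [DecidableEq n] [DecidableEq m]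
    {M : Matrix n n ℂ} {N : Matrix m m ℂ} (hM : M.PosSemidef) (hN : N.PosSemidef) :
    (M ⊗ₖ N).PosSemidef := by
  exact hM.kronecker hN

/-- a matrix in `S_1^0` having at least one entangled edge, all of whose
entangled edges are incident to a single fixed vertex v, is not separable. -/
theorem stmt18 {p q : ℕ} (A : Matrix (Fin p × Fin q) (Fin p × Fin q) ℝ)
    (hsymm : A.IsSymm)
    (hoff : ∀ x y, x ≠ y → A x y ≤ 0)
    (htr : A.trace = 1)
    (hrow : ∀ x, (∑ y, A x y) = 0)
    (hexists : ∃ x y : Fin p × Fin q, A x y ≠ 0 ∧ x.1 ≠ y.1 ∧ x.2 ≠ y.2)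
    (v : Fin p × Fin q)
    (hv : ∀ x y : Fin p × Fin q, A x y ≠ 0 → x.1 ≠ y.1 → x.2 ≠ y.2 → x = v ∨ y = v) :
    ¬ SeparableStateR A := by
  rintro ⟨m, c, ρ, η, hc0, _hc1, hρ, hη, hA⟩
  classical
  set B : Matrix (Fin p × Fin q) (Fin p × Fin q) ℝ := ptrans A with hBdef
  -- basic facts about B
  have hBsymm : ∀ x y, B x y = B y x := by
    intro x y
    show A (x.1, y.2) (y.1, x.2) = A (y.1, x.2) (x.1, y.2)
    exact (hsymm.apply _ _).symm
  have hBvv : B v v = A v v := by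
    show A (v.1, v.2) (v.1, v.2) = A v v
    simp
  -- row v of B
  set E : ℝ := ∑ y, (if y.1 ≠ v.1 ∧ y.2 ≠ v.2 then A v y else 0) with hE
  have hrowBv : ∀ y, B v y = A v y - (if y.1 ≠ v.1 ∧ y.2 ≠ v.2 then A v y else 0) := by
    intro y
    show A (v.1, y.2) (y.1, v.2) = _
    by_cases h1 : y.1 = v.1
    · rw [if_neg (by simp [h1])]
      rw [h1]
      have h2 : A (v.1, y.2) (v.1, v.2) = A (v.1, v.2) (v.1, y.2) := hsymm.apply _ _
      rw [h2]
      rw [show ((v.1, y.2) : Fin p × Fin q) = y from Prod.ext h1.symm rfl,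
        show ((v.1, v.2) : Fin p × Fin q) = v from Prod.ext rfl rfl]
      ring
    · by_cases h2 : y.2 = v.2
      · rw [if_neg (by simp [h2]), h2,
          show ((v.1, v.2) : Fin p × Fin q) = v from Prod.ext rfl rfl,
          show ((y.1, v.2) : Fin p × Fin q) = y from Prod.ext rfl h2.symm]
        ring
      · rw [if_pos ⟨h1, h2⟩]
        have hz : A (v.1, y.2) (y.1, v.2) = 0 := by
          by_contra hnz
          rcases hv _ _ hnz (fun h => h1 h.symm) h2 with hc | hc
          · exact h2 (Prod.ext_iff.mp hc).2
          · exact h1 (Prod.ext_iff.mp hc).1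
        rw [hz]; ring
  have hRv : (∑ y, B v y) = -E := by
    calc (∑ y, B v y)
        = ∑ y, (A v y - (if y.1 ≠ v.1 ∧ y.2 ≠ v.2 then A v y else 0)) :=
          Finset.sum_congr rfl (fun y _ => hrowBv y)
      _ = (∑ y, A v y) - E := Finset.sum_sub_distrib _ _
      _ = -E := by rw [hrow v]; ring
  have hCv : (∑ x, B x v) = -E := by
    rw [← hRv]
    exact Finset.sum_congr rfl (fun x _ => hBsymm x v)
  -- E < 0
  have hEneg : E < 0 := by
    obtain ⟨x₀, y₀, hne, h1, h2⟩ := hexists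
    obtain ⟨w, hw0, hw1, hw2⟩ : ∃ w : Fin p × Fin q, A v w ≠ 0 ∧ w.1 ≠ v.1 ∧ w.2 ≠ v.2 := by
      rcases hv x₀ y₀ hne h1 h2 with rfl | rfl
      · exact ⟨y₀, hne, fun h => h1 h.symm, fun h => h2 h.symm⟩
      · refine ⟨x₀, ?_, h1, h2⟩
        rw [← hsymm.apply]
        exact hne
    have hlt : E < ∑ _y : Fin p × Fin q, (0 : ℝ) := by
      apply Finset.sum_lt_sum
      · intro y _
        split_ifs with h
        · exact hoff v y (by rintro rfl; exact h.1 rfl)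
        · exact le_refl _
      · refine ⟨w, Finset.mem_univ w, ?_⟩
        rw [if_pos ⟨hw1, hw2⟩]
        exact lt_of_le_of_ne (hoff v w (by rintro rfl; exact hw1 rfl)) hw0
    simpa using hlt
  -- A v v ≥ 0
  have hAvv : 0 ≤ A v v := by
    have h1 : A v v + ∑ y ∈ Finset.univ.erase v, A v y = ∑ y, A v y :=
      Finset.add_sum_erase _ _ (Finset.mem_univ v)
    have h2 : (∑ y ∈ Finset.univ.erase v, A v y) ≤ 0 :=
      Finset.sum_nonpos (fun y hy => hoff v y (Ne.symm (Finset.mem_erase.mp hy).1))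
    rw [hrow v] at h1
    linarith
  -- total sum of B is zero
  have hT : (∑ x, ∑ y, B x y) = 0 := by
    have hinv : Function.Involutive
        (fun t : (Fin p × Fin q) × (Fin p × Fin q) => ((t.1.1, t.2.2), (t.2.1, t.1.2))) := by
      intro t; rfl
    have := Fintype.sum_equiv hinv.toPerm
      (fun t : (Fin p × Fin q) × (Fin p × Fin q) => B t.1 t.2)
      (fun t : (Fin p × Fin q) × (Fin p × Fin q) => A t.1 t.2)
      (fun t => rfl)
    calc (∑ x, ∑ y, B x y) = ∑ t : (Fin p × Fin q) × (Fin p × Fin q), B t.1 t.2 :=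
          (Fintype.sum_prod_type (f := fun t : (Fin p × Fin q) × (Fin p × Fin q) => B t.1 t.2)).symm
      _ = ∑ t : (Fin p × Fin q) × (Fin p × Fin q), A t.1 t.2 := this
      _ = ∑ x, ∑ y, A x y :=
          Fintype.sum_prod_type (f := fun t : (Fin p × Fin q) × (Fin p × Fin q) => A t.1 t.2)
      _ = 0 := by simp [hrow]
  -- the test vector
  set S : ℝ := -E with hSdef
  have hS : 0 < S := by simp [hSdef]; linarith
  set d : ℝ := A v v with hddef
  have hden : 0 < d + S := by linarith
  set ε : ℝ := S / (d + S) with hεdef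
  have hε : 0 < ε := div_pos hS hden
  have hεd : ε * d ≤ S := by
    rw [hεdef, div_mul_eq_mul_div, div_le_iff₀ hden]
    nlinarith
  set z : Fin p × Fin q → ℝ := fun x => if x = v then 1 - ε else 1 with hzdef
  -- the real quadratic form is negative
  have hinner : ∀ x, (∑ y, B x y * z y) = (∑ y, B x y) - ε * B x v := by
    intro x
    have h : ∀ y, B x y * z y = B x y - (if y = v then ε * B x v else 0) := by
      intro y
      by_cases hy : y = v
      · subst hy; simp [hzdef]; ring
      · simp [hzdef, hy]
    rw [Finset.sum_congr rfl (fun y _ => h y), Finset.sum_sub_distrib,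
      Finset.sum_ite_eq' Finset.univ v (fun _ => ε * B x v)]
    simp
  have houter : (∑ x, z x * ((∑ y, B x y) - ε * B x v))
      = (∑ x, ((∑ y, B x y) - ε * B x v)) - ε * ((∑ y, B v y) - ε * B v v) := by
    have h : ∀ x, z x * ((∑ y, B x y) - ε * B x v)
        = ((∑ y, B x y) - ε * B x v)
          - (if x = v then ε * ((∑ y, B v y) - ε * B v v) else 0) := by
      intro x
      by_cases hx : x = v
      · subst hx; simp [hzdef]; ring
      · simp [hzdef, hx]
    rw [Finset.sum_congr rfl (fun x _ => h x), Finset.sum_sub_distrib,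
      Finset.sum_ite_eq' Finset.univ v (fun _ => ε * ((∑ y, B v y) - ε * B v v))]
    simp
  have hQval : (∑ x, z x * ∑ y, B x y * z y) = ε * ε * d - 2 * ε * S := by
    calc (∑ x, z x * ∑ y, B x y * z y)
        = ∑ x, z x * ((∑ y, B x y) - ε * B x v) := by
          refine Finset.sum_congr rfl (fun x _ => ?_)
          rw [hinner x]
      _ = (∑ x, ((∑ y, B x y) - ε * B x v)) - ε * ((∑ y, B v y) - ε * B v v) := houter
      _ = ((∑ x, ∑ y, B x y) - ε * (∑ x, B x v)) - ε * ((∑ y, B v y) - ε * B v v) := by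
          rw [Finset.sum_sub_distrib, Finset.mul_sum]
      _ = ε * ε * d - 2 * ε * S := by
          rw [hT, hCv, hRv, hBvv]
          ring
  have hQneg : (∑ x, z x * ∑ y, B x y * z y) < 0 := by
    rw [hQval]
    nlinarith
  -- the complex side: partial transpose of a separable state is PSD
  have hMsum : B.map (fun x : ℝ => (x : ℂ)) = ∑ i, (c i : ℂ) • (ρ i ⊗ₖ (η i)ᵀ) := by
    ext x y
    have h1 : B.map (fun x : ℝ => (x : ℂ)) x y
        = (A.map (fun x : ℝ => (x : ℂ))) (x.1, y.2) (y.1, x.2) := rfl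
    rw [h1, hA]
    simp [Matrix.sum_apply, Matrix.kroneckerMap_apply, Matrix.transpose_apply]
  have hpsd : ∀ i, (ρ i ⊗ₖ (η i)ᵀ).PosSemidef :=
    fun i => kron_psd (hρ i).2.1 ((hη i).2.1.transpose)
  set w : Fin p × Fin q → ℂ := fun x => ((z x : ℝ) : ℂ) with hwdef
  have hform : ∀ (N : Matrix (Fin p × Fin q) (Fin p × Fin q) ℂ),
      star w ⬝ᵥ N *ᵥ w = ∑ x, ∑ y, star (w x) * (N x y * w y) := by
    intro N
    simp [dotProduct, Matrix.mulVec, Finset.mul_sum]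
  have hkey : (0 : ℂ) ≤ star w ⬝ᵥ (B.map (fun x : ℝ => (x : ℂ))) *ᵥ w := by
    rw [hMsum, hform]
    have hsw : ∀ x y, star (w x) * ((∑ i, (c i : ℂ) • (ρ i ⊗ₖ (η i)ᵀ)) x y * w y)
        = ∑ i, (c i : ℂ) * (star (w x) * ((ρ i ⊗ₖ (η i)ᵀ) x y * w y)) := by
      intro x y
      simp [Matrix.sum_apply, Finset.sum_mul, Finset.mul_sum]
      refine Finset.sum_congr rfl (fun i _ => ?_)
      ring
    calc (0:ℂ) ≤ ∑ i, (c i : ℂ) * (star w ⬝ᵥ (ρ i ⊗ₖ (η i)ᵀ) *ᵥ w) := by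
          refine Finset.sum_nonneg (fun i _ => ?_)
          exact mul_nonneg (Complex.zero_le_real.mpr (hc0 i)) ((hpsd i).dotProduct_mulVec_nonneg w)
      _ = ∑ x, ∑ y, star (w x) * ((∑ i, (c i : ℂ) • (ρ i ⊗ₖ (η i)ᵀ)) x y * w y) := by
          have hR : (∑ x, ∑ y, star (w x) * ((∑ i, (c i : ℂ) • (ρ i ⊗ₖ (η i)ᵀ)) x y * w y))
              = ∑ x, ∑ y, ∑ i, (c i : ℂ) * (star (w x) * ((ρ i ⊗ₖ (η i)ᵀ) x y * w y)) :=
            Finset.sum_congr rfl fun x _ => Finset.sum_congr rfl fun y _ => hsw x y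
          have hL : (∑ i, (c i : ℂ) * (star w ⬝ᵥ (ρ i ⊗ₖ (η i)ᵀ) *ᵥ w))
              = ∑ i, ∑ x, ∑ y, (c i : ℂ) * (star (w x) * ((ρ i ⊗ₖ (η i)ᵀ) x y * w y)) := by
            refine Finset.sum_congr rfl fun i _ => ?_
            rw [hform, Finset.mul_sum]
            exact Finset.sum_congr rfl fun x _ => Finset.mul_sum _ _ _
          rw [hR, hL, Finset.sum_comm]
          exact Finset.sum_congr rfl fun x _ => Finset.sum_comm
  have hcast : star w ⬝ᵥ (B.map (fun x : ℝ => (x : ℂ))) *ᵥ w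
      = ((∑ x, z x * ∑ y, B x y * z y : ℝ) : ℂ) := by
    rw [hform]
    push_cast
    refine Finset.sum_congr rfl (fun x _ => ?_)
    rw [Finset.mul_sum]
    refine Finset.sum_congr rfl (fun y _ => ?_)
    simp [hwdef, Matrix.map_apply, Complex.conj_ofReal]
  rw [hcast] at hkey
  have := Complex.zero_le_real.mp hkey
  linarith
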